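/- Let B be a nonempty finite set, P_B a probability distribution on B, and (G_b, P_{X_b})_{b∈B} a family of pairwise isomorphic probabilistic graphs (there exist graph isomorphisms between them that also carry the vertex distributions onto each other). Then the chromatic entropy of the disjoint union with mixture distribution Σ_b P_B(b) P_{X_b} equals the chromatic entropy of any single component: H_χ(⊔_{b∈B} G_b, Σ_b P_B(b) P_{X_b}) = H_χ(G_b, P_{X_b}) for every b ∈ B. -/

import Mathlib

open Finset

def sigmaGraph {A : Type*} {V : A → Type*} (G : ∀ a, SimpleGraph (V a)) :
    SimpleGraph (Σ a, V a) where
  Adj u v := ∃ h : u.1 = v.1, (G v.1).Adj (h ▸ u.2) v.2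
  symm := by
    constructor
    rintro ⟨a, x⟩ ⟨b, y⟩ ⟨h, hadj⟩
    dsimp only at h
    subst h
    exact ⟨rfl, hadj.symm⟩
  loopless := by
    constructor
    rintro ⟨a, x⟩ ⟨h, hadj⟩
    exact (G a).irrefl hadj

noncomputable def H2 {A : Type*} [Fintype A] (p : A → ℝ) : ℝ :=
  -∑ a, p a * Real.logb 2 (p a)

noncomputable def colorEntropy {V : Type*} [Fintype V] (p : V → ℝ) (c : V → ℕ) : ℝ :=
  -∑ k ∈ Finset.univ.image c,
      (∑ v ∈ Finset.univ.filter (fun v => c v = k), p v) *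
        Real.logb 2 (∑ v ∈ Finset.univ.filter (fun v => c v = k), p v)

noncomputable def Hchi {V : Type*} [Fintype V] (G : SimpleGraph V) (p : V → ℝ) : ℝ :=
  sInf {x | ∃ c : V → ℕ, (∀ u v, G.Adj u v → c u ≠ c v) ∧ x = colorEntropy p c}


noncomputable def ent (q : ℝ) : ℝ := (Real.log 2)⁻¹ * Real.negMulLog q

lemma ent_eq (q : ℝ) : -(q * Real.logb 2 q) = ent q := by
  unfold ent Real.negMulLog Real.logb
  ring

lemma ent_zero : ent 0 = 0 := by simp [ent]

lemma concaveOn_ent : ConcaveOn ℝ (Set.Ici (0:ℝ)) ent := by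
  have := Real.concaveOn_negMulLog.smul (c := (Real.log 2)⁻¹)
    (by positivity)
  exact this

lemma colorEntropy_eq {V : Type*} [Fintype V] (p : V → ℝ) (c : V → ℕ) :
    colorEntropy p c = ∑ k ∈ Finset.univ.image c,
      ent (∑ v ∈ Finset.univ.filter (fun v => c v = k), p v) := by
  unfold colorEntropy
  rw [← Finset.sum_neg_distrib]
  exact Finset.sum_congr rfl fun k _ => ent_eq _

lemma colorEntropy_nonneg {V : Type*} [Fintype V] {p : V → ℝ}
    (hp : p ∈ stdSimplex ℝ V) (c : V → ℕ) : 0 ≤ colorEntropy p c := by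
  unfold colorEntropy
  rw [← Finset.sum_neg_distrib]
  apply Finset.sum_nonneg
  intro k _
  have h0 : 0 ≤ ∑ v ∈ Finset.univ.filter (fun v => c v = k), p v :=
    Finset.sum_nonneg fun v _ => hp.1 v
  have h1 : (∑ v ∈ Finset.univ.filter (fun v => c v = k), p v) ≤ 1 := by
    rw [← hp.2]
    exact Finset.sum_le_sum_of_subset_of_nonneg (Finset.subset_univ _)
      (fun v _ _ => hp.1 v)
  have := Real.logb_nonpos (b := 2) (by norm_num) h0 h1
  nlinarith

lemma hchiSet_nonempty {V : Type*} [Fintype V] (G : SimpleGraph V) (p : V → ℝ) :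
    {x | ∃ c : V → ℕ, (∀ u v, G.Adj u v → c u ≠ c v) ∧ x = colorEntropy p c}.Nonempty := by
  refine ⟨colorEntropy p (fun v => (Fintype.equivFin V v : ℕ)), fun v => (Fintype.equivFin V v : ℕ), ?_, rfl⟩
  intro u v huv h
  exact G.ne_of_adj huv (by
    have : Fintype.equivFin V u = Fintype.equivFin V v := Fin.ext h
    exact (Fintype.equivFin V).injective this)

lemma hchiSet_bdd {V : Type*} [Fintype V] (G : SimpleGraph V) {p : V → ℝ}
    (hp : p ∈ stdSimplex ℝ V) :
    ∀ x ∈ {x | ∃ c : V → ℕ, (∀ u v, G.Adj u v → c u ≠ c v) ∧ x = colorEntropy p c}, (0:ℝ) ≤ x := by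
  rintro x ⟨c, -, rfl⟩
  exact colorEntropy_nonneg hp c

lemma Hchi_le {V : Type*} [Fintype V] (G : SimpleGraph V) {p : V → ℝ}
    (hp : p ∈ stdSimplex ℝ V) {c : V → ℕ} (hc : ∀ u v, G.Adj u v → c u ≠ c v) :
    Hchi G p ≤ colorEntropy p c :=
  csInf_le ⟨0, hchiSet_bdd G hp⟩ ⟨c, hc, rfl⟩

lemma le_Hchi {V : Type*} [Fintype V] (G : SimpleGraph V) (p : V → ℝ) {y : ℝ}
    (h : ∀ c : V → ℕ, (∀ u v, G.Adj u v → c u ≠ c v) → y ≤ colorEntropy p c) :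
    y ≤ Hchi G p :=
  le_csInf (hchiSet_nonempty G p) (by rintro x ⟨c, hc, rfl⟩; exact h c hc)

lemma sum_filter_equiv {V W : Type*} [Fintype V] [Fintype W] (e : V ≃ W)
    (p : W → ℝ) (d : W → ℕ) (k : ℕ) :
    ∑ v ∈ Finset.univ.filter (fun v => d v = k), p v
      = ∑ u ∈ Finset.univ.filter (fun u => d (e u) = k), p (e u) := by
  rw [Finset.sum_filter, Finset.sum_filter]
  exact (Fintype.sum_equiv e _ _ (fun u => rfl)).symm

lemma image_comp_equiv {V W : Type*} [Fintype V] [Fintype W] (e : V ≃ W) (d : W → ℕ) :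
    Finset.univ.image (fun u => d (e u)) = Finset.univ.image d := by
  ext k
  simp only [Finset.mem_image, Finset.mem_univ, true_and]
  exact ⟨fun ⟨u, h⟩ => ⟨e u, h⟩, fun ⟨v, h⟩ => ⟨e.symm v, by simpa using h⟩⟩

theorem stmt9 {B : Type*} [Fintype B] [Nonempty B] {V : B → Type*} [∀ b, Fintype (V b)]
    (G : ∀ b, SimpleGraph (V b)) (PB : B → ℝ) (p : ∀ b, V b → ℝ)
    (hPB : PB ∈ stdSimplex ℝ B) (hp : ∀ b, p b ∈ stdSimplex ℝ (V b))
    (hiso : ∀ b b', ∃ ψ : G b ≃g G b', ∀ x, p b x = p b' (ψ x)) :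
    ∀ b, Hchi (sigmaGraph G) (fun x => PB x.1 * p x.1 x.2) = Hchi (G b) (p b) := by
  intro b
  choose ψ hψ using hiso b
  set w : (Σ a, V a) → ℝ := fun x => PB x.1 * p x.1 x.2 with hwdef
  have hwsimplex : w ∈ stdSimplex ℝ (Σ a, V a) := by
    constructor
    · intro x; exact mul_nonneg (hPB.1 x.1) ((hp x.1).1 x.2)
    · rw [← Finset.univ_sigma_univ, Finset.sum_sigma]
      simp only [hwdef, ← Finset.mul_sum]
      simp only [(hp _).2, mul_one]
      exact hPB.2
  have hQ : ∀ (c : (Σ a, V a) → ℕ) (k : ℕ),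
      ∑ x ∈ Finset.univ.filter (fun x => c x = k), w x
        = ∑ b' : B, PB b' * ∑ v ∈ Finset.univ.filter (fun v => c ⟨b', v⟩ = k), p b' v := by
    intro c k
    rw [Finset.sum_filter, ← Finset.univ_sigma_univ, Finset.sum_sigma]
    refine Finset.sum_congr rfl fun b' _ => ?_
    rw [Finset.sum_filter, Finset.mul_sum]
    refine Finset.sum_congr rfl fun v _ => ?_
    by_cases h : c ⟨b', v⟩ = k <;> simp [h, hwdef]
  have hq : ∀ (b' : B) (d : V b' → ℕ) (k : ℕ),
      ∑ v ∈ Finset.univ.filter (fun v => d v = k), p b' v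
        = ∑ u ∈ Finset.univ.filter (fun u => d (ψ b' u) = k), p b u := by
    intro b' d k
    rw [sum_filter_equiv (ψ b').toEquiv (p b') d k]
    exact Finset.sum_congr rfl fun u _ => (hψ b' u).symm
  refine le_antisymm ?_ ?_
  · -- Hchi sigma ≤ Hchi b
    apply le_Hchi (G b) (p b)
    intro c hc
    have hproper : ∀ u v, (sigmaGraph G).Adj u v →
        (fun x : Σ a, V a => c ((ψ x.1).symm x.2)) u ≠ (fun x : Σ a, V a => c ((ψ x.1).symm x.2)) v := by
      rintro ⟨a, u⟩ ⟨a2, v⟩ ⟨h, hadj⟩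
      dsimp only at h
      subst h
      exact hc _ _ (((ψ a).symm.map_adj_iff).mpr hadj)
    have key : colorEntropy w (fun x : Σ a, V a => c ((ψ x.1).symm x.2)) = colorEntropy (p b) c := by
      have himg : Finset.univ.image (fun x : Σ a, V a => c ((ψ x.1).symm x.2))
          = Finset.univ.image c := by
        ext k
        simp only [Finset.mem_image, Finset.mem_univ, true_and]
        constructor
        · rintro ⟨⟨a, u⟩, h⟩; exact ⟨(ψ a).symm u, h⟩
        · rintro ⟨u, h⟩
          exact ⟨⟨b, ψ b u⟩, by simpa using h⟩
      have hmass : ∀ k, ∑ x ∈ Finset.univ.filter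
            (fun x : Σ a, V a => c ((ψ x.1).symm x.2) = k), w x
          = ∑ v ∈ Finset.univ.filter (fun v => c v = k), p b v := by
        intro k
        rw [hQ (fun x : Σ a, V a => c ((ψ x.1).symm x.2)) k]
        have hcomp' : ∀ b' : B,
            (∑ v ∈ Finset.univ.filter (fun v => c ((ψ b').symm v) = k), p b' v)
              = ∑ v ∈ Finset.univ.filter (fun v => c v = k), p b v := by
          intro b'
          rw [hq b' (fun v => c ((ψ b').symm v)) k]
          refine Finset.sum_congr ?_ (fun _ _ => rfl)
          ext u; simp
        rw [Finset.sum_congr rfl (fun b' _ => by rw [hcomp' b'])]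
        rw [← Finset.sum_mul, hPB.2, one_mul]
      rw [colorEntropy_eq, colorEntropy_eq, himg]
      exact Finset.sum_congr rfl fun k _ => by rw [hmass k]
    calc Hchi (sigmaGraph G) w ≤ colorEntropy w (fun x : Σ a, V a => c ((ψ x.1).symm x.2)) :=
          Hchi_le _ hwsimplex hproper
      _ = colorEntropy (p b) c := key
  · -- Hchi b ≤ Hchi sigma
    apply le_Hchi (sigmaGraph G) w
    intro c hc
    set r : B → ℕ → ℝ := fun b' k => ∑ v ∈ Finset.univ.filter (fun v => c ⟨b', v⟩ = k), p b' v
      with hrdef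
    set K := Finset.univ.image c with hKdef
    have hrnonneg : ∀ b' k, 0 ≤ r b' k :=
      fun b' k => Finset.sum_nonneg fun v _ => (hp b').1 v
    have hcomp : ∀ b' : B, Hchi (G b) (p b) ≤ ∑ k ∈ K, ent (r b' k) := by
      intro b'
      have hd : ∀ u v, (G b).Adj u v →
          (fun u => c ⟨b', ψ b' u⟩) u ≠ (fun u => c ⟨b', ψ b' u⟩) v := by
        intro u v huv
        exact hc _ _ ⟨rfl, ((ψ b').map_adj_iff).mpr huv⟩
      have hle := Hchi_le (G b) (hp b) hd
      rw [colorEntropy_eq] at hle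
      refine hle.trans (le_of_eq ?_)
      have hqr : ∀ k, (∑ u ∈ Finset.univ.filter (fun u => c ⟨b', ψ b' u⟩ = k), p b u)
          = r b' k := fun k => (hq b' (fun v => c ⟨b', v⟩) k).symm
      rw [Finset.sum_congr rfl (fun k _ => by rw [hqr k])]
      refine Finset.sum_subset ?_ ?_
      · intro k hk
        rw [hKdef]
        simp only [Finset.mem_image, Finset.mem_univ, true_and] at hk ⊢
        obtain ⟨u, hu⟩ := hk
        exact ⟨⟨b', ψ b' u⟩, hu⟩
      · intro k _ hk
        have : r b' k = 0 := by
          rw [hrdef]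
          apply Finset.sum_eq_zero
          intro v hv
          exfalso
          apply hk
          simp only [Finset.mem_filter, Finset.mem_univ, true_and] at hv
          simp only [Finset.mem_image, Finset.mem_univ, true_and]
          exact ⟨(ψ b').symm v, by simpa using hv⟩
        rw [this, ent_zero]
    have hJ : ∀ k ∈ K, (∑ b' : B, PB b' * ent (r b' k)) ≤ ent (∑ b' : B, PB b' * r b' k) := by
      intro k _
      have := concaveOn_ent.le_map_sum (t := Finset.univ) (w := PB) (p := fun b' => r b' k)
        (fun i _ => hPB.1 i) hPB.2 (fun i _ => hrnonneg i k)
      simpa [smul_eq_mul] using this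
    calc Hchi (G b) (p b) = ∑ b' : B, PB b' * Hchi (G b) (p b) := by
          rw [← Finset.sum_mul, hPB.2, one_mul]
      _ ≤ ∑ b' : B, PB b' * ∑ k ∈ K, ent (r b' k) :=
          Finset.sum_le_sum fun b' _ => mul_le_mul_of_nonneg_left (hcomp b') (hPB.1 b')
      _ = ∑ k ∈ K, ∑ b' : B, PB b' * ent (r b' k) := by
          simp only [Finset.mul_sum]; exact Finset.sum_comm
      _ ≤ ∑ k ∈ K, ent (∑ b' : B, PB b' * r b' k) := Finset.sum_le_sum hJ
      _ = colorEntropy w c := by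
          rw [colorEntropy_eq]
          exact Finset.sum_congr rfl fun k _ => by rw [← hQ c k]
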